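/- For a strictly increasing sequence u_1 < ... < u_n of natural numbers, the product of (u_j - u_i) over all 1 ≤ i < j ≤ n is divisible by the superfactorial 1!·2!·3!···(n-1)!. -/

import Mathlib

open Finset

/-- A Gelfand–Tsetlin pattern with `n` rows: row `i` (for `i : Fin n`) has
entries `entry i 0, …, entry i i`, rows interlace, and entries beyond the
row length are normalized to `0`. -/
structure GTPattern (n : ℕ) where
  entry : Fin n → ℕ → ℕ
  interlace : ∀ i : Fin n, ∀ h : i.1 + 1 < n, ∀ j : ℕ, j ≤ i.1 →
    entry ⟨i.1 + 1, h⟩ j ≤ entry i j ∧ entry i j < entry ⟨i.1 + 1, h⟩ (j + 1)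
  support : ∀ i : Fin n, ∀ j : ℕ, i.1 < j → entry i j = 0

/-- The number of Gelfand–Tsetlin patterns with `n` rows and bottom row `u`. -/
noncomputable def GTPcount (n : ℕ) (u : Fin n → ℕ) : ℕ :=
  Nat.card {T : GTPattern n //
    ∀ j : Fin n, T.entry ⟨n - 1, Nat.sub_lt j.pos Nat.one_pos⟩ j.1 = u j}

/-- `GTP` of a finite set: patterns whose bottom row is the increasing
enumeration of `U`. -/
noncomputable def GTPfinset (U : Finset ℕ) : ℕ :=
  GTPcount U.card (fun j => ((U.orderIsoOfFin rfl j : ℕ)))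

/-- `P(A,B) = ∏_{(a,b) ∈ A×B, a<b} (b-a)`. -/
def Pprod (A B : Finset ℕ) : ℕ :=
  ∏ p ∈ (A ×ˢ B).filter (fun p => p.1 < p.2), (p.2 - p.1)

/-- The superfactorial `sf m = 1!·2!···m!`. -/
def superfactorial : ℕ → ℕ
  | 0 => 1
  | m + 1 => superfactorial m * Nat.factorial (m + 1)

lemma superfactorial_eq : ∀ m : ℕ, superfactorial m = Nat.superFactorial m
  | 0 => rfl
  | m + 1 => by
    rw [superfactorial, Nat.superFactorial, superfactorial_eq m, mul_comm]

/-- The superfactorial `1!·2!···(n-1)!` divides `∏_{i<j} (u_j - u_i)`. -/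
theorem stmt_2 (n : ℕ) (u : Fin n → ℕ) (hu : StrictMono u) :
    superfactorial (n - 1) ∣
      ∏ p ∈ Finset.univ.filter (fun p : Fin n × Fin n => p.1 < p.2),
        (u p.2 - u p.1) := by
  match n with
  | 0 => simp [superfactorial]
  | m + 1 =>
    rw [superfactorial_eq]
    rw [← Int.natCast_dvd_natCast]
    have key := Matrix.superFactorial_dvd_vandermonde_det (fun i : Fin (m + 1) => (u i : ℤ))
    rw [Matrix.det_vandermonde] at key
    convert key using 1
    · rfl
    push_cast [Nat.cast_prod]
    rw [Finset.prod_sigma']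
    refine Finset.prod_nbij' (fun p => (⟨p.1, p.2⟩ : Σ _ : Fin (m+1), Fin (m+1)))
      (fun p => (p.1, p.2)) ?_ ?_ ?_ ?_ ?_
    · rintro ⟨i, j⟩ h
      simp only [Finset.mem_filter] at h
      simp [Finset.mem_Ioi, h.2]
    · rintro ⟨i, j⟩ h
      simp only [Finset.mem_sigma, Finset.mem_Ioi] at h
      simp [h.2]
    · intros; rfl
    · intros; rfl
    · rintro ⟨i, j⟩ h
      simp only [Finset.mem_filter] at h
      have := h.2
      rw [Nat.cast_sub (le_of_lt (hu h.2))]
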